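/- For every real x, the function J₂(x) := (1/(2π)) ∫₀^{2π} cos(2t)·cos(x·sin t) dt satisfies x²/8 − x⁴/96 ≤ J₂(x). -/

import Mathlib

set_option maxHeartbeats 1000000

open Real

/-- If `f 0 = 0` and `f` has nonnegative derivative on `[0,∞)`, then `f ≥ 0` there. -/
lemma nonneg_of_hasDerivAt {f f' : ℝ → ℝ} (hd : ∀ y, HasDerivAt f (f' y) y)
    (h0 : f 0 = 0) (hf' : ∀ y, 0 ≤ y → 0 ≤ f' y) : ∀ y, 0 ≤ y → 0 ≤ f y := by
  intro y hy
  have hm : MonotoneOn f (Set.Ici (0:ℝ)) := by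
    apply monotoneOn_of_hasDerivWithinAt_nonneg (convex_Ici 0)
      (fun z _ => (hd z).continuousAt.continuousWithinAt)
      (fun z hz => (hd z).hasDerivWithinAt)
    intro z hz
    rw [interior_Ici] at hz
    exact hf' z (le_of_lt hz)
  have := hm Set.self_mem_Ici hy hy
  rwa [h0] at this

lemma ladder_c2 (y : ℝ) (hy : 0 ≤ y) : 0 ≤ Real.cos y - (1 - y^2/2) := by
  apply nonneg_of_hasDerivAt (f' := fun y => y - Real.sin y) ?_ (by norm_num) ?_ y hy
  · intro z
    have h2 : HasDerivAt (fun y : ℝ => 1 - y^2/2) (-z) z := by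
      have := ((hasDerivAt_pow 2 z).div_const 2).const_sub 1
      refine this.congr_deriv ?_
      norm_num
    refine ((Real.hasDerivAt_cos z).sub h2).congr_deriv ?_; ring
  · intro z hz
    have := Real.sin_le hz
    show 0 ≤ z - Real.sin z
    linarith

lemma ladder_s3 (y : ℝ) (hy : 0 ≤ y) : 0 ≤ Real.sin y - (y - y^3/6) := by
  apply nonneg_of_hasDerivAt (f' := fun y => Real.cos y - (1 - y^2/2)) ?_ (by norm_num) ?_ y hy
  · intro z
    have h2 : HasDerivAt (fun y : ℝ => y - y^3/6) (1 - z^2/2) z := by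
      have := (hasDerivAt_id z).sub ((hasDerivAt_pow 3 z).div_const 6)
      refine this.congr_deriv ?_
      norm_num; ring
    exact (Real.hasDerivAt_sin z).sub h2
  · intro z hz
    exact ladder_c2 z hz

lemma ladder_c4 (y : ℝ) (hy : 0 ≤ y) : 0 ≤ (1 - y^2/2 + y^4/24) - Real.cos y := by
  apply nonneg_of_hasDerivAt (f' := fun y => Real.sin y - (y - y^3/6)) ?_ (by norm_num) ?_ y hy
  · intro z
    have h2 : HasDerivAt (fun y : ℝ => 1 - y^2/2 + y^4/24) (-z + z^3/6) z := by
      have := (((hasDerivAt_pow 2 z).div_const 2).const_sub 1).add ((hasDerivAt_pow 4 z).div_const 24)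
      refine this.congr_deriv ?_
      norm_num; ring
    refine (h2.sub (Real.hasDerivAt_cos z)).congr_deriv ?_; ring
  · intro z hz
    exact ladder_s3 z hz

lemma ladder_s5 (y : ℝ) (hy : 0 ≤ y) : 0 ≤ (y - y^3/6 + y^5/120) - Real.sin y := by
  apply nonneg_of_hasDerivAt (f' := fun y => (1 - y^2/2 + y^4/24) - Real.cos y)
    ?_ (by norm_num) ?_ y hy
  · intro z
    have h2 : HasDerivAt (fun y : ℝ => y - y^3/6 + y^5/120) (1 - z^2/2 + z^4/24) z := by
      have := ((hasDerivAt_id z).sub ((hasDerivAt_pow 3 z).div_const 6)).add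
        ((hasDerivAt_pow 5 z).div_const 120)
      refine this.congr_deriv ?_
      norm_num; ring
    exact h2.sub (Real.hasDerivAt_sin z)
  · intro z hz
    exact ladder_c4 z hz

lemma ladder_c6 (y : ℝ) (hy : 0 ≤ y) :
    0 ≤ Real.cos y - (1 - y^2/2 + y^4/24 - y^6/720) := by
  apply nonneg_of_hasDerivAt (f' := fun y => (y - y^3/6 + y^5/120) - Real.sin y)
    ?_ (by norm_num) ?_ y hy
  · intro z
    have h2 : HasDerivAt (fun y : ℝ => 1 - y^2/2 + y^4/24 - y^6/720)
        (-z + z^3/6 - z^5/120) z := by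
      have := ((((hasDerivAt_pow 2 z).div_const 2).const_sub 1).add
        ((hasDerivAt_pow 4 z).div_const 24)).sub ((hasDerivAt_pow 6 z).div_const 720)
      refine this.congr_deriv ?_
      norm_num; ring
    refine ((Real.hasDerivAt_cos z).sub h2).congr_deriv ?_; ring
  · intro z hz
    exact ladder_s5 z hz

lemma ladder_s7 (y : ℝ) (hy : 0 ≤ y) :
    0 ≤ Real.sin y - (y - y^3/6 + y^5/120 - y^7/5040) := by
  apply nonneg_of_hasDerivAt (f' := fun y => Real.cos y - (1 - y^2/2 + y^4/24 - y^6/720))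
    ?_ (by norm_num) ?_ y hy
  · intro z
    have h2 : HasDerivAt (fun y : ℝ => y - y^3/6 + y^5/120 - y^7/5040)
        (1 - z^2/2 + z^4/24 - z^6/720) z := by
      have := (((hasDerivAt_id z).sub ((hasDerivAt_pow 3 z).div_const 6)).add
        ((hasDerivAt_pow 5 z).div_const 120)).sub ((hasDerivAt_pow 7 z).div_const 5040)
      refine this.congr_deriv ?_
      norm_num; ring
    exact (Real.hasDerivAt_sin z).sub h2
  · intro z hz
    exact ladder_c6 z hz

lemma ladder_c8 (y : ℝ) (hy : 0 ≤ y) :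
    0 ≤ (1 - y^2/2 + y^4/24 - y^6/720 + y^8/40320) - Real.cos y := by
  apply nonneg_of_hasDerivAt
    (f' := fun y => Real.sin y - (y - y^3/6 + y^5/120 - y^7/5040)) ?_ (by norm_num) ?_ y hy
  · intro z
    have h2 : HasDerivAt (fun y : ℝ => 1 - y^2/2 + y^4/24 - y^6/720 + y^8/40320)
        (-z + z^3/6 - z^5/120 + z^7/5040) z := by
      have := (((((hasDerivAt_pow 2 z).div_const 2).const_sub 1).add
        ((hasDerivAt_pow 4 z).div_const 24)).sub ((hasDerivAt_pow 6 z).div_const 720)).add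
        ((hasDerivAt_pow 8 z).div_const 40320)
      refine this.congr_deriv ?_
      norm_num; ring
    refine (h2.sub (Real.hasDerivAt_cos z)).congr_deriv ?_; ring
  · intro z hz
    exact ladder_s7 z hz

/-- Sixth-order Taylor lower bound for cosine, all reals. -/
lemma cos_ge_P (y : ℝ) : 1 - y^2/2 + y^4/24 - y^6/720 ≤ Real.cos y := by
  rcases le_total 0 y with hy | hy
  · have := ladder_c6 y hy; linarith
  · have := ladder_c6 (-y) (by linarith)
    rw [Real.cos_neg] at this
    nlinarith [this]

/-- Eighth-order Taylor upper bound for cosine, all reals. -/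
lemma cos_le_P (y : ℝ) : Real.cos y ≤ 1 - y^2/2 + y^4/24 - y^6/720 + y^8/40320 := by
  rcases le_total 0 y with hy | hy
  · have := ladder_c8 y hy; linarith
  · have := ladder_c8 (-y) (by linarith)
    rw [Real.cos_neg] at this
    nlinarith [this]

/-- The second Bessel function of the first kind, via its integral representation. -/
noncomputable def J2 (x : ℝ) : ℝ :=
  (1/(2*π)) * ∫ t in (0:ℝ)..(2*π), Real.cos (2*t) * Real.cos (x * Real.sin t)

lemma sin_pow_int (n : ℕ) :
    ∫ t in (0:ℝ)..(2*π), Real.sin t ^ (n+2)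
      = (n+1)/(n+2) * ∫ t in (0:ℝ)..(2*π), Real.sin t ^ n := by
  rw [integral_sin_pow]
  simp [Real.sin_two_pi]

lemma I0 : ∫ t in (0:ℝ)..(2*π), Real.sin t ^ 0 = 2*π := by simp

lemma I2 : ∫ t in (0:ℝ)..(2*π), Real.sin t ^ 2 = π := by
  rw [integral_sin_sq]
  simp [Real.sin_two_pi]

lemma I4 : ∫ t in (0:ℝ)..(2*π), Real.sin t ^ 4 = 3*π/4 := by
  have h := sin_pow_int 2
  rw [I2] at h
  norm_num at h
  linarith [h]

lemma I6 : ∫ t in (0:ℝ)..(2*π), Real.sin t ^ 6 = 5*π/8 := by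
  have h := sin_pow_int 4
  rw [I4] at h
  norm_num at h
  linarith [h]

lemma I8 : ∫ t in (0:ℝ)..(2*π), Real.sin t ^ 8 = 35*π/64 := by
  have h := sin_pow_int 6
  rw [I6] at h
  norm_num at h
  linarith [h]

/-- Pointwise lower bound on the integrand. -/
lemma pointwise_bound (x t : ℝ) :
    1 + (-2 - x^2/2) * Real.sin t^2 + (x^2 + x^4/24) * Real.sin t^4
      + (-(x^4/12) - x^6/720) * Real.sin t^6 + (x^6/360 - x^8/40320) * Real.sin t^8
    ≤ Real.cos (2*t) * Real.cos (x * Real.sin t) := by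
  set s := Real.sin t with hs
  set y := x * s with hy
  have hc2t : Real.cos (2*t) = 1 - 2*s^2 := by
    rw [Real.cos_two_mul, Real.cos_sq']; ring
  have h6 := cos_ge_P y
  have h8 := cos_le_P y
  have hlo := Real.neg_one_le_cos (2*t)
  have hhi := Real.cos_le_one (2*t)
  -- cos(2t) * (cos y - P(y)) ≥ -(y^8/40320)
  have key : -(y^8/40320) ≤ Real.cos (2*t) * (Real.cos y - (1 - y^2/2 + y^4/24 - y^6/720)) := by
    nlinarith [mul_nonneg (by linarith : (0:ℝ) ≤ Real.cos (2*t) + 1)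
      (by linarith : (0:ℝ) ≤ Real.cos y - (1 - y^2/2 + y^4/24 - y^6/720))]
  have expand : Real.cos (2*t) * (1 - y^2/2 + y^4/24 - y^6/720) - y^8/40320
      = 1 + (-2 - x^2/2) * s^2 + (x^2 + x^4/24) * s^4
        + (-(x^4/12) - x^6/720) * s^6 + (x^6/360 - x^8/40320) * s^8 := by
    rw [hc2t, hy]
    ring
  have split : Real.cos (2*t) * (Real.cos y - (1 - y^2/2 + y^4/24 - y^6/720))
      = Real.cos (2*t) * Real.cos y - Real.cos (2*t) * (1 - y^2/2 + y^4/24 - y^6/720) := by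
    ring
  linarith [key, split, expand]

theorem J2_lower_bound (x : ℝ) : x^2/8 - x^4/96 ≤ J2 x := by
  have hπ : (0:ℝ) < π := Real.pi_pos
  have hab : (0:ℝ) ≤ 2*π := by linarith
  have hcont : Continuous fun t : ℝ => Real.cos (2*t) * Real.cos (x * Real.sin t) := by
    continuity
  have hIrhs : IntervalIntegrable (fun t : ℝ => Real.cos (2*t) * Real.cos (x * Real.sin t))
      MeasureTheory.volume 0 (2*π) := hcont.intervalIntegrable _ _
  rcases le_total (x^2) 48 with hx | hx
  · -- small x: Taylor bound
    set c2 : ℝ := -2 - x^2/2 with hc2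
    set c4 : ℝ := x^2 + x^4/24 with hc4
    set c6 : ℝ := -(x^4/12) - x^6/720 with hc6
    set c8 : ℝ := x^6/360 - x^8/40320 with hc8
    have i0 : IntervalIntegrable (fun _ : ℝ => (1:ℝ)) MeasureTheory.volume 0 (2*π) :=
      intervalIntegrable_const
    have i2 : IntervalIntegrable (fun t : ℝ => c2 * Real.sin t^2) MeasureTheory.volume 0 (2*π) :=
      Continuous.intervalIntegrable (by continuity) _ _
    have i4 : IntervalIntegrable (fun t : ℝ => c4 * Real.sin t^4) MeasureTheory.volume 0 (2*π) :=
      Continuous.intervalIntegrable (by continuity) _ _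
    have i6 : IntervalIntegrable (fun t : ℝ => c6 * Real.sin t^6) MeasureTheory.volume 0 (2*π) :=
      Continuous.intervalIntegrable (by continuity) _ _
    have i8 : IntervalIntegrable (fun t : ℝ => c8 * Real.sin t^8) MeasureTheory.volume 0 (2*π) :=
      Continuous.intervalIntegrable (by continuity) _ _
    have hmono : (∫ t in (0:ℝ)..(2*π),
          (1 + c2 * Real.sin t^2 + c4 * Real.sin t^4 + c6 * Real.sin t^6 + c8 * Real.sin t^8))
        ≤ ∫ t in (0:ℝ)..(2*π), Real.cos (2*t) * Real.cos (x * Real.sin t) := by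
      apply intervalIntegral.integral_mono_on hab
        ((((i0.add i2).add i4).add i6).add i8) hIrhs
      intro t _
      exact pointwise_bound x t
    have hval : (∫ t in (0:ℝ)..(2*π),
          (1 + c2 * Real.sin t^2 + c4 * Real.sin t^4 + c6 * Real.sin t^6 + c8 * Real.sin t^8))
        = 2*π + c2 * π + c4 * (3*π/4) + c6 * (5*π/8) + c8 * (35*π/64) := by
      rw [intervalIntegral.integral_add (((i0.add i2).add i4).add i6) i8,
        intervalIntegral.integral_add ((i0.add i2).add i4) i6,
        intervalIntegral.integral_add (i0.add i2) i4,
        intervalIntegral.integral_add i0 i2,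
        intervalIntegral.integral_const_mul, intervalIntegral.integral_const_mul,
        intervalIntegral.integral_const_mul, intervalIntegral.integral_const_mul,
        intervalIntegral.integral_const, I2, I4, I6, I8]
      simp
    have hV : (1/(2*π)) * (2*π + c2 * π + c4 * (3*π/4) + c6 * (5*π/8) + c8 * (35*π/64))
        = x^2/8 - x^4/96 + x^6/3072 - x^8/147456 := by
      have hπ' : π ≠ 0 := ne_of_gt hπ
      have hE : 2*π + c2 * π + c4 * (3*π/4) + c6 * (5*π/8) + c8 * (35*π/64)
          = 2*π * (x^2/8 - x^4/96 + x^6/3072 - x^8/147456) := by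
        rw [hc2, hc4, hc6, hc8]; ring
      rw [hE, ← mul_assoc]
      rw [one_div, inv_mul_cancel₀ (by positivity : (2*π) ≠ 0), one_mul]
    have hJ : (1/(2*π)) * (2*π + c2 * π + c4 * (3*π/4) + c6 * (5*π/8) + c8 * (35*π/64)) ≤ J2 x := by
      rw [J2]
      apply mul_le_mul_of_nonneg_left _ (by positivity)
      rw [← hval]; exact hmono
    rw [hV] at hJ
    have htail : 0 ≤ x^6/3072 - x^8/147456 := by
      nlinarith [mul_nonneg (pow_nonneg (sq_nonneg x) 3 |>.trans_eq (by ring : (x^2)^3 = x^6))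
        (by linarith : (0:ℝ) ≤ 48 - x^2), sq_nonneg x, pow_nonneg (sq_nonneg x) 3]
    linarith
  · -- large x: trivial bound J2 ≥ -1
    have hlow : (∫ t in (0:ℝ)..(2*π), (-1:ℝ))
        ≤ ∫ t in (0:ℝ)..(2*π), Real.cos (2*t) * Real.cos (x * Real.sin t) := by
      apply intervalIntegral.integral_mono_on hab intervalIntegrable_const hIrhs
      intro t _
      nlinarith [Real.neg_one_le_cos (2*t), Real.cos_le_one (2*t),
        Real.neg_one_le_cos (x * Real.sin t), Real.cos_le_one (x * Real.sin t)]
    have hconst : (∫ t in (0:ℝ)..(2*π), (-1:ℝ)) = -(2*π) := by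
      simp
    have hJ : -1 ≤ J2 x := by
      rw [J2]
      have := mul_le_mul_of_nonneg_left (hconst ▸ hlow) (by positivity : (0:ℝ) ≤ 1/(2*π))
      calc (-1:ℝ) = (1/(2*π)) * (-(2*π)) := by field_simp
        _ ≤ _ := this
    nlinarith [hJ, sq_nonneg x, hx]
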